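/- For the complete multipartite graph K_{ 1,2,...,2 } on n = 2r-1 vertices (one part of size 1 and r-1 parts of size 2), the distance spectral radius equals (n-1+√((n-1)(n+3)))/2. -/

import Mathlib

open SimpleGraph Matrix Finset BigOperators

/-- The distance matrix of a graph on `Fin n`, with real entries `d(u,v)`. -/
noncomputable def distMatrix {n : ℕ} (G : SimpleGraph (Fin n)) : Matrix (Fin n) (Fin n) ℝ :=
  fun u v => (G.dist u v : ℝ)

lemma distMatrix_isHermitian {n : ℕ} (G : SimpleGraph (Fin n)) :
    (distMatrix G).IsHermitian := by
  unfold Matrix.IsHermitian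
  ext u v
  simp [distMatrix, Matrix.conjTranspose_apply, SimpleGraph.dist_comm]

/-- The distance spectral radius: the largest eigenvalue of the distance matrix. -/
noncomputable def lambda1 {n : ℕ} (G : SimpleGraph (Fin n)) : ℝ :=
  ⨆ i, (distMatrix_isHermitian G).eigenvalues i

/-- The transmission of a vertex: the sum of distances to all other vertices. -/
noncomputable def transmission {n : ℕ} (G : SimpleGraph (Fin n)) (v : Fin n) : ℕ :=
  ∑ u, G.dist v u

/-- The maximum transmission. -/
noncomputable def Dmax {n : ℕ} (G : SimpleGraph (Fin n)) : ℕ :=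
  Finset.univ.sup (transmission G)

/-- The minimum transmission. -/
noncomputable def Dmin {n : ℕ} (G : SimpleGraph (Fin n)) : ℕ :=
  sInf (Set.range (transmission G))

/-- The Wiener index: half the sum of all transmissions. -/
noncomputable def wiener {n : ℕ} (G : SimpleGraph (Fin n)) : ℝ :=
  (∑ v, (transmission G v : ℝ)) / 2

/-- The complete multipartite graph `K_{1,2,…,2}` on `n = 2r-1` vertices:
vertex `0` forms the part of size 1, and `{2i-1, 2i}` are the parts of size 2. -/
def K122 (n : ℕ) : SimpleGraph (Fin n) where
  Adj u v := u ≠ v ∧ ¬(u.val ≠ 0 ∧ v.val ≠ 0 ∧ (u.val + 1) / 2 = (v.val + 1) / 2)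
  symm := by
    constructor
    intro u v h
    exact ⟨h.1.symm, fun hc => h.2 ⟨hc.2.1, hc.1, hc.2.2.symm⟩⟩
  loopless := by
    constructor
    intro u h
    exact h.1 rfl

/-! ### Auxiliary lemmas -/

lemma K122_adj_iff {n : ℕ} {u v : Fin n} :
    (K122 n).Adj u v ↔ u ≠ v ∧ (u.val + 1) / 2 ≠ (v.val + 1) / 2 := by
  constructor
  · rintro ⟨h1, h2⟩
    have h1' : u.val ≠ v.val := fun hc => h1 (Fin.ext hc)
    refine ⟨h1, fun hp => h2 ⟨by omega, by omega, hp⟩⟩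
  · rintro ⟨h1, h2⟩
    exact ⟨h1, fun hc => h2 hc.2.2⟩

lemma K122_dist {n : ℕ} (u v : Fin n) :
    (K122 n).dist u v =
      if u = v then 0 else if (u.val + 1) / 2 = (v.val + 1) / 2 then 2 else 1 := by
  by_cases huv : u = v
  · simp [huv]
  rw [if_neg huv]
  have h1' : u.val ≠ v.val := fun hc => huv (Fin.ext hc)
  by_cases hp : (u.val + 1) / 2 = (v.val + 1) / 2
  · rw [if_pos hp]
    have hu0 : u.val ≠ 0 := by omega
    have hv0 : v.val ≠ 0 := by omega
    have hnpos : 0 < n := u.pos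
    set z : Fin n := ⟨0, hnpos⟩ with hz
    have hadj1 : (K122 n).Adj u z := by
      rw [K122_adj_iff]
      constructor
      · intro h; apply hu0; rw [h]
      · simp only [hz]; omega
    have hadj2 : (K122 n).Adj z v := by
      rw [K122_adj_iff]
      constructor
      · intro h; apply hv0; rw [← h]
      · simp only [hz]; omega
    have hnadj : ¬ (K122 n).Adj u v := by
      rw [K122_adj_iff]; push_neg; intro _; exact hp
    let hw : (K122 n).Walk u v := Walk.cons hadj1 (Walk.cons hadj2 Walk.nil)
    have hle : (K122 n).dist u v ≤ 2 := by
      have := SimpleGraph.dist_le hw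
      simpa [hw] using this
    have hne0 : (K122 n).dist u v ≠ 0 := by
      rw [Ne, SimpleGraph.dist_eq_zero_iff_eq_or_not_reachable]
      push_neg
      exact ⟨huv, ⟨hw⟩⟩
    have hne1 : (K122 n).dist u v ≠ 1 := by
      rw [Ne, SimpleGraph.dist_eq_one_iff_adj]
      exact hnadj
    omega
  · rw [if_neg hp]
    rw [SimpleGraph.dist_eq_one_iff_adj, K122_adj_iff]
    exact ⟨huv, hp⟩

/-- The partner of a vertex in `K122 n` (`0` is mapped to itself). -/
def mate {n : ℕ} (hn : n % 2 = 1) (u : Fin n) : Fin n :=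
  ⟨if u.val = 0 then 0 else if u.val % 2 = 1 then u.val + 1 else u.val - 1, by
    have := u.isLt; split_ifs <;> omega⟩

lemma mate_val {n : ℕ} (hn : n % 2 = 1) (u : Fin n) :
    (mate hn u).val = if u.val = 0 then 0 else
      if u.val % 2 = 1 then u.val + 1 else u.val - 1 := rfl

lemma mate_ne {n : ℕ} (hn : n % 2 = 1) {u : Fin n} (hu : u.val ≠ 0) :
    mate hn u ≠ u := by
  intro h
  have := congrArg Fin.val h
  rw [mate_val] at this
  split_ifs at this <;> omega

lemma mate_pair {n : ℕ} (hn : n % 2 = 1) {u : Fin n} (hu : u.val ≠ 0) :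
    ((mate hn u).val + 1) / 2 = (u.val + 1) / 2 := by
  rw [mate_val]
  split_ifs <;> omega

lemma mate_ne_zero {n : ℕ} (hn : n % 2 = 1) {u : Fin n} (hu : u.val ≠ 0) :
    (mate hn u).val ≠ 0 := by
  rw [mate_val]
  split_ifs <;> omega

lemma mate_unique {n : ℕ} (hn : n % 2 = 1) {u v : Fin n} (hu : u.val ≠ 0)
    (hne : v ≠ u) (hp : (v.val + 1) / 2 = (u.val + 1) / 2) : v = mate hn u := by
  have hne' : v.val ≠ u.val := fun hc => hne (Fin.ext hc)
  apply Fin.ext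
  rw [mate_val]
  split_ifs <;> omega

lemma mate_mate {n : ℕ} (hn : n % 2 = 1) {u : Fin n} (hu : u.val ≠ 0) :
    mate hn (mate hn u) = u :=
  (mate_unique hn (mate_ne_zero hn hu) (Ne.symm (mate_ne hn hu))
    (mate_pair hn hu).symm).symm

lemma K122_mulVec {n : ℕ} (hn : n % 2 = 1) (x : Fin n → ℝ) (u : Fin n) :
    (distMatrix (K122 n) *ᵥ x) u
      = (∑ v, x v) - x u + (if u.val = 0 then 0 else x (mate hn u)) := by
  have hentry : ∀ v : Fin n, distMatrix (K122 n) u v * x v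
      = x v - (if v = u then x v else 0)
        + (if v ≠ u ∧ (v.val + 1) / 2 = (u.val + 1) / 2 then x v else 0) := by
    intro v
    have : distMatrix (K122 n) u v
        = if u = v then 0 else if (u.val + 1) / 2 = (v.val + 1) / 2 then 2 else 1 := by
      simp only [distMatrix, K122_dist]
      split_ifs <;> norm_num
    rw [this]
    by_cases h1 : v = u
    · subst h1; simp
    · rw [if_neg (fun h => h1 h.symm)]
      by_cases h2 : (v.val + 1) / 2 = (u.val + 1) / 2
      · rw [if_pos h2.symm, if_neg h1, if_pos ⟨h1, h2⟩]; ring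
      · rw [if_neg (fun h => h2 h.symm), if_neg h1, if_neg (by tauto)]; ring
  have hsum : (distMatrix (K122 n) *ᵥ x) u = ∑ v, distMatrix (K122 n) u v * x v := rfl
  rw [hsum]
  simp_rw [hentry]
  rw [Finset.sum_add_distrib, Finset.sum_sub_distrib, Finset.sum_ite_eq' Finset.univ u x]
  simp only [Finset.mem_univ, if_true]
  congr 1
  by_cases hu : u.val = 0
  · rw [if_pos hu]
    apply Finset.sum_eq_zero
    intro v _
    rw [if_neg]
    rintro ⟨h1, h2⟩
    exact h1 (Fin.ext (by omega))
  · rw [if_neg hu]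
    rw [Finset.sum_eq_single (mate hn u)]
    · rw [if_pos ⟨mate_ne hn hu, mate_pair hn hu⟩]
    · intro v _ hv
      rw [if_neg]
      rintro ⟨h1, h2⟩
      exact hv (mate_unique hn hu h1 h2)
    · intro h; exact absurd (Finset.mem_univ _) h

lemma theta_nonneg {n : ℕ} (hn : 1 ≤ n) :
    0 ≤ ((n : ℝ) - 1 + Real.sqrt (((n : ℝ) - 1) * ((n : ℝ) + 3))) / 2 := by
  have h1 : (1 : ℝ) ≤ (n : ℝ) := by exact_mod_cast hn
  have := Real.sqrt_nonneg (((n : ℝ) - 1) * ((n : ℝ) + 3))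
  linarith

lemma eig_le {n : ℕ} (hodd : n % 2 = 1) {x : Fin n → ℝ} (hx : x ≠ 0) {μ : ℝ}
    (hμ : distMatrix (K122 n) *ᵥ x = μ • x) :
    μ ≤ ((n : ℝ) - 1 + Real.sqrt (((n : ℝ) - 1) * ((n : ℝ) + 3))) / 2 := by
  set θ := ((n : ℝ) - 1 + Real.sqrt (((n : ℝ) - 1) * ((n : ℝ) + 3))) / 2 with hθ
  by_contra hcon
  push_neg at hcon
  have hn1 : 1 ≤ n := by omega
  have hθ0 : 0 ≤ θ := theta_nonneg hn1
  have hμpos : 0 < μ := lt_of_le_of_lt hθ0 hcon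
  set s : ℝ := ∑ v, x v with hs
  have heq : ∀ u : Fin n, s - x u + (if u.val = 0 then 0 else x (mate hodd u)) = μ * x u := by
    intro u
    have h1 := congrFun hμ u
    rw [K122_mulVec hodd] at h1
    simpa using h1
  have hmate_eq : ∀ u : Fin n, u.val ≠ 0 → x (mate hodd u) = x u := by
    intro u hu
    have e1 := heq u
    have e2 := heq (mate hodd u)
    rw [if_neg hu] at e1
    rw [if_neg (mate_ne_zero hodd hu), mate_mate hodd hu] at e2
    have hz : (μ + 2) * (x u - x (mate hodd u)) = 0 := by linear_combination e2 - e1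
    rcases mul_eq_zero.mp hz with h | h
    · linarith
    · linarith
  have hμx : ∀ u : Fin n, u.val ≠ 0 → μ * x u = s := by
    intro u hu
    have e1 := heq u
    rw [if_neg hu, hmate_eq u hu] at e1
    linarith
  set u0 : Fin n := ⟨0, by omega⟩ with hu0
  have e0 : s - x u0 = μ * x u0 := by
    have := heq u0
    rwa [if_pos rfl, add_zero] at this
  by_cases hn3 : n = 1
  · have hall : ∀ u : Fin n, u = u0 := by
      intro u; apply Fin.ext; have := u.isLt; omega
    have hsx : s = x u0 := by
      rw [hs]
      rw [show (Finset.univ : Finset (Fin n)) = {u0} from Finset.eq_singleton_iff_unique_mem.mpr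
        ⟨Finset.mem_univ _, fun v _ => hall v⟩]
      simp
    have hx0 : x u0 ≠ 0 := by
      intro h
      apply hx
      funext v
      rw [hall v, h]; rfl
    have : μ = 0 := by
      have : μ * x u0 = 0 := by linarith
      rcases mul_eq_zero.mp this with h | h
      · exact h
      · exact absurd h hx0
    linarith
  · have hn3' : 3 ≤ n := by omega
    have hsne : s ≠ 0 := by
      intro hs0
      apply hx
      funext u
      by_cases hu : u.val = 0
      · have : u = u0 := Fin.ext hu
        rw [this]
        show x u0 = 0
        have : (μ + 1) * x u0 = 0 := by rw [hs0] at e0; linarith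
        rcases mul_eq_zero.mp this with h | h
        · linarith
        · exact h
      · have := hμx u hu
        rw [hs0] at this
        rcases mul_eq_zero.mp this with h | h
        · linarith
        · exact h
    have hsum : μ * (s - x u0) = ((n : ℝ) - 1) * s := by
      have h1 : s - x u0 = ∑ u ∈ Finset.univ.erase u0, x u := by
        rw [hs, ← Finset.add_sum_erase Finset.univ x (Finset.mem_univ u0)]
        ring
      have h2 : ∑ u ∈ Finset.univ.erase u0, (μ * x u) = ∑ u ∈ Finset.univ.erase u0, s := by
        apply Finset.sum_congr rfl
        intro u hu
        have hu' : u ≠ u0 := (Finset.mem_erase.mp hu).1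
        exact hμx u (fun hc => hu' (Fin.ext hc))
      rw [h1, Finset.mul_sum, h2, Finset.sum_const, Finset.card_erase_of_mem (Finset.mem_univ _)]
      simp only [Finset.card_univ, Fintype.card_fin, nsmul_eq_mul]
      congr 1
      push_cast [Nat.cast_sub hn1]
      ring
    have hq : s * (μ ^ 2 - ((n : ℝ) - 1) * (μ + 1)) = 0 := by
      linear_combination (μ + 1) * hsum - μ * e0
    have hq2 : μ ^ 2 = ((n : ℝ) - 1) * (μ + 1) := by
      rcases mul_eq_zero.mp hq with h | h
      · exact absurd h hsne
      · linarith
    have hkey : (2 * μ - ((n : ℝ) - 1)) ^ 2 = ((n : ℝ) - 1) * ((n : ℝ) + 3) := by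
      linear_combination 4 * hq2
    have hle : 2 * μ - ((n : ℝ) - 1) ≤ Real.sqrt (((n : ℝ) - 1) * ((n : ℝ) + 3)) := by
      calc 2 * μ - ((n : ℝ) - 1) ≤ |2 * μ - ((n : ℝ) - 1)| := le_abs_self _
      _ = Real.sqrt ((2 * μ - ((n : ℝ) - 1)) ^ 2) := (Real.sqrt_sq_eq_abs _).symm
      _ = Real.sqrt (((n : ℝ) - 1) * ((n : ℝ) + 3)) := by rw [hkey]
    rw [hθ] at hcon
    linarith

lemma exists_eigenvalue_eq {n : ℕ} {A : Matrix (Fin n) (Fin n) ℝ} (hA : A.IsHermitian)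
    {x : Fin n → ℝ} (hx : x ≠ 0) {μ : ℝ} (h : A *ᵥ x = μ • x) :
    ∃ i, hA.eigenvalues i = μ := by
  by_contra hcon
  push_neg at hcon
  have hT : Aᵀ = A := by
    ext u v
    have := congrFun (congrFun hA.eq u) v
    simpa [Matrix.conjTranspose_apply] using this
  have hxE : (WithLp.toLp 2 x : EuclideanSpace ℝ (Fin n)) ≠ 0 := by
    intro h; apply hx; simpa using congrArg WithLp.ofLp h
  have hkey : ∀ i, (inner ℝ (hA.eigenvectorBasis i) (WithLp.toLp 2 x : EuclideanSpace ℝ (Fin n)) : ℝ) = 0 := by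
    intro i
    have h1 : ⇑(hA.eigenvectorBasis i) ⬝ᵥ (A *ᵥ x)
        = (A *ᵥ ⇑(hA.eigenvectorBasis i)) ⬝ᵥ x := by
      rw [dotProduct_mulVec, ← Matrix.mulVec_transpose, hT]
    rw [h, hA.mulVec_eigenvectorBasis] at h1
    have h2 : μ * (⇑(hA.eigenvectorBasis i) ⬝ᵥ x)
        = hA.eigenvalues i * (⇑(hA.eigenvectorBasis i) ⬝ᵥ x) := by
      simpa [dotProduct_smul, smul_dotProduct, smul_eq_mul] using h1
    have h3 : ⇑(hA.eigenvectorBasis i) ⬝ᵥ x = 0 := by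
      rcases mul_eq_zero.mp (show (μ - hA.eigenvalues i) * (⇑(hA.eigenvectorBasis i) ⬝ᵥ x) = 0 by
        ring_nf; linarith [h2]) with hc | hc
      · exact absurd (by linarith : hA.eigenvalues i = μ) (hcon i)
      · exact hc
    rw [EuclideanSpace.inner_eq_star_dotProduct]
    simpa [dotProduct_comm] using h3
  have hrep := (hA.eigenvectorBasis).sum_repr' (WithLp.toLp 2 x : EuclideanSpace ℝ (Fin n))
  simp_rw [hkey, zero_smul, Finset.sum_const_zero] at hrep
  exact hxE hrep.symm

/-- The candidate top eigenvector. -/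
noncomputable def thVec (n : ℕ) : Fin n → ℝ :=
  fun u => if u.val = 0 then
    ((n : ℝ) - 1 + Real.sqrt (((n : ℝ) - 1) * ((n : ℝ) + 3))) / 2 - ((n : ℝ) - 1)
  else 1

lemma theta_quad {n : ℕ} (hn : 1 ≤ n) :
    (((n : ℝ) - 1 + Real.sqrt (((n : ℝ) - 1) * ((n : ℝ) + 3))) / 2) ^ 2
      = ((n : ℝ) - 1) * (((n : ℝ) - 1 + Real.sqrt (((n : ℝ) - 1) * ((n : ℝ) + 3))) / 2)
        + ((n : ℝ) - 1) := by
  have h1 : (1 : ℝ) ≤ (n : ℝ) := by exact_mod_cast hn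
  have hΔ : 0 ≤ ((n : ℝ) - 1) * ((n : ℝ) + 3) := by nlinarith
  have hq := Real.sq_sqrt hΔ
  linear_combination hq / 4

lemma thVec_eigen {n : ℕ} (hodd : n % 2 = 1) (hn3 : 3 ≤ n) :
    distMatrix (K122 n) *ᵥ thVec n
      = (((n : ℝ) - 1 + Real.sqrt (((n : ℝ) - 1) * ((n : ℝ) + 3))) / 2) • thVec n := by
  set θ := ((n : ℝ) - 1 + Real.sqrt (((n : ℝ) - 1) * ((n : ℝ) + 3))) / 2 with hθ
  have hn1 : 1 ≤ n := by omega
  set u0 : Fin n := ⟨0, by omega⟩ with hu0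
  have hsum : ∑ v, thVec n v = θ := by
    rw [← Finset.add_sum_erase Finset.univ (thVec n) (Finset.mem_univ u0)]
    have h1 : thVec n u0 = θ - ((n : ℝ) - 1) := by
      simp [thVec, hu0, hθ]
    have h2 : ∑ v ∈ Finset.univ.erase u0, thVec n v = (n : ℝ) - 1 := by
      have : ∀ v ∈ Finset.univ.erase u0, thVec n v = 1 := by
        intro v hv
        have hv' : v ≠ u0 := (Finset.mem_erase.mp hv).1
        have : v.val ≠ 0 := fun hc => hv' (Fin.ext hc)
        simp [thVec, this]
      rw [Finset.sum_congr rfl this, Finset.sum_const,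
        Finset.card_erase_of_mem (Finset.mem_univ _)]
      simp only [Finset.card_univ, Fintype.card_fin, nsmul_eq_mul, mul_one]
      push_cast [Nat.cast_sub hn1]
      ring
    rw [h1, h2]
    ring
  funext u
  rw [K122_mulVec hodd, hsum]
  by_cases hu : u.val = 0
  · have hueq : u = u0 := Fin.ext hu
    rw [if_pos hu, hueq]
    have h1 : thVec n u0 = θ - ((n : ℝ) - 1) := by simp [thVec, hu0, hθ]
    show θ - thVec n u0 + 0 = θ * thVec n u0
    rw [h1]
    have := theta_quad hn1
    rw [← hθ] at this
    nlinarith [this]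
  · rw [if_neg hu]
    have h1 : thVec n u = 1 := by simp [thVec, hu]
    have h2 : thVec n (mate hodd u) = 1 := by simp [thVec, mate_ne_zero hodd hu]
    show θ - thVec n u + thVec n (mate hodd u) = θ * thVec n u
    rw [h1, h2]
    ring

lemma thVec_ne_zero {n : ℕ} (hn3 : 3 ≤ n) : thVec n ≠ 0 := by
  intro h
  have h1 : thVec n ⟨1, by omega⟩ = 1 := by simp [thVec]
  rw [h] at h1
  simpa using h1

theorem stmt0 (r : ℕ) (hr : 1 ≤ r) (n : ℕ) (hn : n = 2 * r - 1) :
    lambda1 (K122 n) =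
      ((n : ℝ) - 1 + Real.sqrt (((n : ℝ) - 1) * ((n : ℝ) + 3))) / 2 := by
  have hodd : n % 2 = 1 := by omega
  have hn1 : 1 ≤ n := by omega
  haveI : Nonempty (Fin n) := ⟨⟨0, by omega⟩⟩
  by_cases h1 : n = 1
  · have hD : distMatrix (K122 n) = 0 := by
      ext u v
      have huv : u = v := Fin.ext (by have := u.isLt; have := v.isLt; omega)
      simp [distMatrix, huv]
    have hev : ∀ i, (distMatrix_isHermitian (K122 n)).eigenvalues i = 0 := by
      intro i
      have h := (distMatrix_isHermitian (K122 n)).mulVec_eigenvectorBasis i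
      have h0 : distMatrix (K122 n) *ᵥ
          ⇑((distMatrix_isHermitian (K122 n)).eigenvectorBasis i) = 0 := by
        funext u
        rw [K122_mulVec hodd]
        have hall : ∀ v : Fin n, v = u := fun v =>
          Fin.ext (by have := v.isLt; have := u.isLt; omega)
        rw [if_pos (by have := u.isLt; omega : u.val = 0)]
        have hs1 : ∑ v, (⇑((distMatrix_isHermitian (K122 n)).eigenvectorBasis i)) v
            = (⇑((distMatrix_isHermitian (K122 n)).eigenvectorBasis i)) u := by
          rw [show (Finset.univ : Finset (Fin n)) = {u} from
            Finset.eq_singleton_iff_unique_mem.mpr ⟨Finset.mem_univ _, fun v _ => hall v⟩]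
          simp
        rw [hs1]
        show _ - _ + (0 : ℝ) = 0
        ring
      rw [h0] at h
      rcases smul_eq_zero.mp h.symm with hc | hc
      · exact hc
      · exact absurd (by simpa using hc)
          ((distMatrix_isHermitian (K122 n)).eigenvectorBasis.orthonormal.ne_zero i)
    have hL : lambda1 (K122 n) = 0 := by
      rw [lambda1]
      simp_rw [hev]
      exact ciSup_const
    rw [hL, h1]
    norm_num
  · have hn3 : 3 ≤ n := by omega
    obtain ⟨i0, hi0⟩ := exists_eigenvalue_eq (distMatrix_isHermitian (K122 n))
      (thVec_ne_zero hn3) (thVec_eigen hodd hn3)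
    apply le_antisymm
    · apply ciSup_le
      intro i
      exact eig_le hodd
        (by simpa using (distMatrix_isHermitian (K122 n)).eigenvectorBasis.orthonormal.ne_zero i)
        ((distMatrix_isHermitian (K122 n)).mulVec_eigenvectorBasis i)
    · rw [← hi0]
      exact le_ciSup (Set.Finite.bddAbove (Set.finite_range _)) i0
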